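/- Let Γ = (γ_ij) be a migration matrix of size n, partition {1, …, n} into I = {1, …, p} and J = {p+1, …, n} with q = n − p ≥ 1. Assume the two-blocks conditions: r_1 = … = r_p, K_1 = … = K_p, r_{p+1} = … = r_n, K_{p+1} = … = K_n (all r_i > 0, K_i > 0), and γ_1J = … = γ_pJ, γ_(p+1)I = … = γ_nI, T_1 = … = T_p, T_{p+1} = … = T_n. Let β ≥ 0 and suppose (a, b) ∈ ℝ² with a > 0, b > 0 satisfies p·r_1·a·(1 − a/K_1) + β(γ_IJ·b − γ_JI·a) = 0 and q·r_n·b·(1 − b/K_n) + β(γ_JI·a − γ_IJ·b) = 0. Then the vector x ∈ ℝ^n defined by x_i = a for i ∈ I and x_i = b for i ∈ J is a positive equilibrium of the n-patch logistic system with migration rate β. -/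
import Mathlib


open Finset

/-- Block I = patches with index < p. -/
def blockI (p q : ℕ) : Finset (Fin (p + q)) := univ.filter (fun i => (i : ℕ) < p)

/-- Block J = patches with index ≥ p. -/
def blockJ (p q : ℕ) : Finset (Fin (p + q)) := univ.filter (fun i => p ≤ (i : ℕ))

/-- For i ∈ I, γ_iJ = Σ_{j∈J} γ_ij : the flux from block J to patch i. -/
noncomputable def gammaiJ {p q : ℕ} (Γ : Matrix (Fin (p + q)) (Fin (p + q)) ℝ)
    (i : Fin (p + q)) : ℝ := ∑ j ∈ blockJ p q, Γ i j

/-- For j ∈ J, γ_jI = Σ_{i∈I} γ_ji : the flux from block I to patch j. -/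
noncomputable def gammajI {p q : ℕ} (Γ : Matrix (Fin (p + q)) (Fin (p + q)) ℝ)
    (j : Fin (p + q)) : ℝ := ∑ i ∈ blockI p q, Γ j i

/-- For i ∈ I, T_i = Σ_{j∈J} γ_ji + Σ_{k∈I, k≠i} (γ_ki − γ_ik). -/
noncomputable def TI {p q : ℕ} (Γ : Matrix (Fin (p + q)) (Fin (p + q)) ℝ)
    (i : Fin (p + q)) : ℝ :=
  ∑ j ∈ blockJ p q, Γ j i + ∑ k ∈ (blockI p q).erase i, (Γ k i - Γ i k)

/-- For j ∈ J, T_j = Σ_{i∈I} γ_ij + Σ_{k∈J, k≠j} (γ_kj − γ_jk). -/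
noncomputable def TJ {p q : ℕ} (Γ : Matrix (Fin (p + q)) (Fin (p + q)) ℝ)
    (j : Fin (p + q)) : ℝ :=
  ∑ i ∈ blockI p q, Γ i j + ∑ k ∈ (blockJ p q).erase j, (Γ k j - Γ j k)

/-- γ_IJ = Σ_{i∈I, j∈J} γ_ij : the flux from block J to block I. -/
noncomputable def gammaIJ {p q : ℕ} (Γ : Matrix (Fin (p + q)) (Fin (p + q)) ℝ) : ℝ :=
  ∑ i ∈ blockI p q, ∑ j ∈ blockJ p q, Γ i j

/-- γ_JI = Σ_{i∈I, j∈J} γ_ji : the flux from block I to block J. -/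
noncomputable def gammaJI {p q : ℕ} (Γ : Matrix (Fin (p + q)) (Fin (p + q)) ℝ) : ℝ :=
  ∑ i ∈ blockI p q, ∑ j ∈ blockJ p q, Γ j i

/-- under the two-blocks conditions, if (a,b) with a,b > 0 satisfies
p r₁ a (1 − a/K₁) + β(γ_IJ b − γ_JI a) = 0 and
q rₙ b (1 − b/Kₙ) + β(γ_JI a − γ_IJ b) = 0, then the vector equal to a on block I
and b on block J is a positive equilibrium of the n-patch logistic system. -/

lemma card_blockI (p q : ℕ) : (blockI p q).card = p := by
  have h : blockI p q = Finset.map (Fin.castAddEmb q) Finset.univ := by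
    ext i
    simp only [blockI, Finset.mem_filter, Finset.mem_univ, true_and, Finset.mem_map,
      Fin.castAddEmb, Function.Embedding.coeFn_mk]
    constructor
    · intro hi
      exact ⟨⟨(i : ℕ), hi⟩, by ext; simp [Fin.castAdd]⟩
    · rintro ⟨j, rfl⟩
      simpa using j.isLt
  rw [h, Finset.card_map, Finset.card_univ, Fintype.card_fin]

lemma card_blockJ (p q : ℕ) : (blockJ p q).card = q := by
  have h : blockJ p q
      = Finset.filter (fun (i : Fin (p+q)) => ¬ ((i : ℕ) < p)) Finset.univ := by
    ext i; simp [blockJ, not_lt]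
  have h2 := Finset.card_filter_add_card_filter_not
    (s := (Finset.univ : Finset (Fin (p + q)))) (p := fun i => (i : ℕ) < p)
  have h3 : (Finset.filter (fun i => (i : ℕ) < p) Finset.univ : Finset (Fin (p+q))).card = p :=
    card_blockI p q
  rw [h]
  have h4 : (Finset.univ : Finset (Fin (p + q))).card = p + q := by simp
  omega

lemma sum_univ_split {p q : ℕ} (f : Fin (p + q) → ℝ) :
    ∑ j, f j = ∑ j ∈ blockI p q, f j + ∑ j ∈ blockJ p q, f j := by
  have h : blockJ p q
      = Finset.filter (fun (i : Fin (p+q)) => ¬ ((i : ℕ) < p)) Finset.univ := by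
    ext i; simp [blockJ, not_lt]
  rw [blockI, h, Finset.sum_filter_add_sum_filter_not]

lemma antisym_sum {n : ℕ} (s : Finset (Fin n)) (f : Fin n → Fin n → ℝ) :
    ∑ i ∈ s, ∑ k ∈ s.erase i, (f k i - f i k) = 0 := by
  have h : ∀ i ∈ s, ∑ k ∈ s.erase i, (f k i - f i k) = ∑ k ∈ s, (f k i - f i k) := by
    intro i hi
    rw [Finset.sum_erase_eq_sub hi]
    ring
  rw [Finset.sum_congr rfl h]
  have h2 : ∑ i ∈ s, ∑ k ∈ s, (f k i - f i k)
      = ∑ i ∈ s, ∑ k ∈ s, f k i - ∑ i ∈ s, ∑ k ∈ s, f i k := by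
    simp [Finset.sum_sub_distrib]
  rw [h2, Finset.sum_comm, sub_self]

theorem stmt_15 {p q : ℕ} (hp : 0 < p) (hq : 0 < q)
    (Γ : Matrix (Fin (p + q)) (Fin (p + q)) ℝ)
    (hoff : ∀ i j : Fin (p + q), i ≠ j → 0 ≤ Γ i j)
    (hdiag : ∀ i : Fin (p + q), Γ i i = -∑ j ∈ univ.erase i, Γ j i)
    (r K : Fin (p + q) → ℝ) (hr : ∀ i, 0 < r i) (hK : ∀ i, 0 < K i)
    (hrI : ∀ i ∈ blockI p q, ∀ i' ∈ blockI p q, r i = r i' ∧ K i = K i')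
    (hrJ : ∀ j ∈ blockJ p q, ∀ j' ∈ blockJ p q, r j = r j' ∧ K j = K j')
    (hgI : ∀ i ∈ blockI p q, ∀ i' ∈ blockI p q, gammaiJ Γ i = gammaiJ Γ i')
    (hgJ : ∀ j ∈ blockJ p q, ∀ j' ∈ blockJ p q, gammajI Γ j = gammajI Γ j')
    (hTI : ∀ i ∈ blockI p q, ∀ i' ∈ blockI p q, TI Γ i = TI Γ i')
    (hTJ : ∀ j ∈ blockJ p q, ∀ j' ∈ blockJ p q, TJ Γ j = TJ Γ j')
    (β : ℝ) (hβ : 0 ≤ β) (a b : ℝ) (ha : 0 < a) (hb : 0 < b)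
    (heqa : (p : ℝ) * r ⟨0, by omega⟩ * a * (1 - a / K ⟨0, by omega⟩)
      + β * (gammaIJ Γ * b - gammaJI Γ * a) = 0)
    (heqb : (q : ℝ) * r ⟨p + q - 1, by omega⟩ * b * (1 - b / K ⟨p + q - 1, by omega⟩)
      + β * (gammaJI Γ * a - gammaIJ Γ * b) = 0) :
    (∀ i, 0 < (if (i : ℕ) < p then a else b))
    ∧ ∀ i : Fin (p + q),
        r i * (if (i : ℕ) < p then a else b)
            * (1 - (if (i : ℕ) < p then a else b) / K i)
          + β * ∑ j ∈ univ.erase i,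
              (Γ i j * (if (j : ℕ) < p then a else b)
                - Γ j i * (if (i : ℕ) < p then a else b)) = 0 := by
  have hp' : (0:ℝ) < (p:ℝ) := by exact_mod_cast hp
  have hq' : (0:ℝ) < (q:ℝ) := by exact_mod_cast hq
  have hmemI0 : (⟨0, by omega⟩ : Fin (p+q)) ∈ blockI p q := by
    simp only [blockI, Finset.mem_filter, Finset.mem_univ, true_and]; exact hp
  have hmemJn : (⟨p+q-1, by omega⟩ : Fin (p+q)) ∈ blockJ p q := by
    simp only [blockJ, Finset.mem_filter, Finset.mem_univ, true_and]; omega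
  refine ⟨fun i => by split <;> [exact ha; exact hb], fun i => ?_⟩
  by_cases hi : (i : ℕ) < p
  · -- i in block I
    have hiI : i ∈ blockI p q := by
      simp only [blockI, Finset.mem_filter, Finset.mem_univ, true_and]; exact hi
    have hsplit : ∀ f : Fin (p+q) → ℝ, ∑ j ∈ Finset.univ.erase i, f j
        = ∑ j ∈ (blockI p q).erase i, f j + ∑ j ∈ blockJ p q, f j := by
      intro f
      rw [Finset.sum_erase_eq_sub (Finset.mem_univ i), sum_univ_split f,
        Finset.sum_erase_eq_sub hiI]
      ring
    rw [if_pos hi, hsplit]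
    have hA : ∑ j ∈ (blockI p q).erase i,
        (Γ i j * (if (j:ℕ) < p then a else b) - Γ j i * a)
        = (∑ j ∈ (blockI p q).erase i, (Γ i j - Γ j i)) * a := by
      rw [Finset.sum_mul]
      apply Finset.sum_congr rfl
      intro j hj
      have hj' : (j:ℕ) < p := by
        have := (Finset.mem_erase.mp hj).2
        simpa only [blockI, Finset.mem_filter, Finset.mem_univ, true_and] using this
      rw [if_pos hj']; ring
    have hB : ∑ j ∈ blockJ p q,
        (Γ i j * (if (j:ℕ) < p then a else b) - Γ j i * a)
        = (∑ j ∈ blockJ p q, Γ i j) * b - (∑ j ∈ blockJ p q, Γ j i) * a := by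
      rw [Finset.sum_sub_distrib, Finset.sum_mul, Finset.sum_mul]
      congr 1
      apply Finset.sum_congr rfl
      intro j hj
      have hj' : ¬ ((j:ℕ) < p) := by
        have := hj
        simp only [blockJ, Finset.mem_filter, Finset.mem_univ, true_and] at this
        omega
      rw [if_neg hj']
    rw [hA, hB]
    have hkey : (∑ j ∈ (blockI p q).erase i, (Γ i j - Γ j i)) * a
        + ((∑ j ∈ blockJ p q, Γ i j) * b - (∑ j ∈ blockJ p q, Γ j i) * a)
        = gammaiJ Γ i * b - TI Γ i * a := by
      simp only [gammaiJ, TI, Finset.sum_sub_distrib]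
      ring
    rw [hkey]
    -- constancy facts
    have hpg : (p:ℝ) * gammaiJ Γ i = gammaIJ Γ := by
      have h1 : gammaIJ Γ = ∑ i' ∈ blockI p q, gammaiJ Γ i' := rfl
      rw [h1, Finset.sum_congr rfl (fun i' hi' => hgI i' hi' i hiI),
        Finset.sum_const, card_blockI, nsmul_eq_mul]
    have hpT : (p:ℝ) * TI Γ i = gammaJI Γ := by
      have h1 : ∑ i' ∈ blockI p q, TI Γ i' = gammaJI Γ := by
        simp only [TI, Finset.sum_add_distrib,
          antisym_sum (blockI p q) (fun k i' => Γ k i'), add_zero]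
        rfl
      rw [← h1, Finset.sum_congr rfl (fun i' hi' => hTI i' hi' i hiI),
        Finset.sum_const, card_blockI, nsmul_eq_mul]
    obtain ⟨hri, hKi⟩ := hrI i hiI _ hmemI0
    have hmain : (p:ℝ) * (r i * a * (1 - a / K i)
        + β * (gammaiJ Γ i * b - TI Γ i * a)) = 0 := by
      rw [hri, hKi]
      linear_combination heqa + β * b * hpg - β * a * hpT
    have := mul_eq_zero.mp hmain
    rcases this with h | h
    · exact absurd h (ne_of_gt hp')
    · exact h
  · -- i in block J
    have hiJ : i ∈ blockJ p q := by
      simp only [blockJ, Finset.mem_filter, Finset.mem_univ, true_and]; omega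
    have hsplit : ∀ f : Fin (p+q) → ℝ, ∑ j ∈ Finset.univ.erase i, f j
        = ∑ j ∈ blockI p q, f j + ∑ j ∈ (blockJ p q).erase i, f j := by
      intro f
      rw [Finset.sum_erase_eq_sub (Finset.mem_univ i), sum_univ_split f,
        Finset.sum_erase_eq_sub hiJ]
      ring
    rw [if_neg hi, hsplit]
    have hA : ∑ j ∈ blockI p q,
        (Γ i j * (if (j:ℕ) < p then a else b) - Γ j i * b)
        = (∑ j ∈ blockI p q, Γ i j) * a - (∑ j ∈ blockI p q, Γ j i) * b := by
      rw [Finset.sum_sub_distrib, Finset.sum_mul, Finset.sum_mul]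
      congr 1
      apply Finset.sum_congr rfl
      intro j hj
      have hj' : (j:ℕ) < p := by
        simpa only [blockI, Finset.mem_filter, Finset.mem_univ, true_and] using hj
      rw [if_pos hj']
    have hB : ∑ j ∈ (blockJ p q).erase i,
        (Γ i j * (if (j:ℕ) < p then a else b) - Γ j i * b)
        = (∑ j ∈ (blockJ p q).erase i, (Γ i j - Γ j i)) * b := by
      rw [Finset.sum_mul]
      apply Finset.sum_congr rfl
      intro j hj
      have hj' : ¬ ((j:ℕ) < p) := by
        have := (Finset.mem_erase.mp hj).2
        simp only [blockJ, Finset.mem_filter, Finset.mem_univ, true_and] at this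
        omega
      rw [if_neg hj']; ring
    rw [hA, hB]
    have hkey : ((∑ j ∈ blockI p q, Γ i j) * a - (∑ j ∈ blockI p q, Γ j i) * b)
        + (∑ j ∈ (blockJ p q).erase i, (Γ i j - Γ j i)) * b
        = gammajI Γ i * a - TJ Γ i * b := by
      simp only [gammajI, TJ, Finset.sum_sub_distrib]
      ring
    rw [hkey]
    have hqg : (q:ℝ) * gammajI Γ i = gammaJI Γ := by
      have h1 : gammaJI Γ = ∑ j ∈ blockJ p q, gammajI Γ j := by
        rw [gammaJI, Finset.sum_comm]; rfl
      rw [h1, Finset.sum_congr rfl (fun j hj => hgJ j hj i hiJ),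
        Finset.sum_const, card_blockJ, nsmul_eq_mul]
    have hqT : (q:ℝ) * TJ Γ i = gammaIJ Γ := by
      have h1 : ∑ j ∈ blockJ p q, TJ Γ j = gammaIJ Γ := by
        simp only [TJ, Finset.sum_add_distrib,
          antisym_sum (blockJ p q) (fun k j => Γ k j), add_zero]
        rw [gammaIJ, Finset.sum_comm]
      rw [← h1, Finset.sum_congr rfl (fun j hj => hTJ j hj i hiJ),
        Finset.sum_const, card_blockJ, nsmul_eq_mul]
    obtain ⟨hri, hKi⟩ := hrJ i hiJ _ hmemJn
    have hmain : (q:ℝ) * (r i * b * (1 - b / K i)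
        + β * (gammajI Γ i * a - TJ Γ i * b)) = 0 := by
      rw [hri, hKi]
      linear_combination heqb + β * a * hqg - β * b * hqT
    rcases mul_eq_zero.mp hmain with h | h
    · exact absurd h (ne_of_gt hq')
    · exact h
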